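/- arXiv:1905.12592 — 4 statements merged into one kernel-verified Lean document; each statement's English description precedes it below -/
import Mathlib

section
/- Let z ~ N(0, σ²I_d), let x₁,…,xₙ ∈ R^d, w ∈ R^d, t₁,…,tₙ ∈ {0,1}, and y₁,…,yₙ ∈ R. Define τ̂_n = (1/n)·[ Σ_{i: t_i=1} y_i (1 + exp(−w·x_i)exp(−z·x_i)) − Σ_{i: t_i=0} y_i (1 + exp(w·x_i)exp(z·x_i)) ] and τ̂ = (1/n)·[ Σ_{i: t_i=1} y_i (1 + exp(−w·x_i)) − Σ_{i: t_i=0} y_i (1 + exp(w·x_i)) ]. Then E[τ̂_n] = τ̂ + (1/n) Σ_{i=1}^n α_i (exp(σ²‖x_i‖²/2) − 1), where α_i = (−1)^{1−t_i} y_i exp((−1)^{t_i} w·x_i). -/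
open MeasureTheory ProbabilityTheory Finset
open scoped NNReal ENNReal Real

lemma gaussianPDFReal_mul_exp {v : ℝ≥0} (hv : v ≠ 0) (c x : ℝ) :
    gaussianPDFReal 0 v x * Real.exp (c * x)
      = Real.exp (v * c ^ 2 / 2) * gaussianPDFReal (v * c) v x := by
  have hv' : (v : ℝ) ≠ 0 := by exact_mod_cast hv
  have he : -(x - 0)^2/(2*(v:ℝ)) + c*x = (v:ℝ)*c^2/2 + (-(x - (v:ℝ)*c)^2/(2*(v:ℝ))) := by
    field_simp
    ring
  simp only [gaussianPDFReal]
  rw [mul_assoc, ← Real.exp_add, he, Real.exp_add]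
  ring

lemma gaussianReal_smul_eq (c : ℝ) (v : ℝ≥0) :
    (fun x => ((gaussianPDFReal 0 v x).toNNReal : ℝ≥0) • Real.exp (c * x))
      = fun x => gaussianPDFReal 0 v x * Real.exp (c * x) := by
  funext x
  rw [NNReal.smul_def, Real.coe_toNNReal _ (gaussianPDFReal_nonneg 0 v x), smul_eq_mul]

lemma integrable_exp_mul_gaussianReal (c : ℝ) (v : ℝ≥0) :
    Integrable (fun x => Real.exp (c * x)) (gaussianReal 0 v) := by
  by_cases hv : v = 0
  · simp only [hv, gaussianReal_zero_var]
    refine ⟨(by fun_prop : Measurable fun x => Real.exp (c * x)).aestronglyMeasurable, ?_⟩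
    rw [HasFiniteIntegral, lintegral_dirac]
    exact ENNReal.coe_lt_top
  rw [gaussianReal_of_var_ne_zero _ hv]
  rw [show gaussianPDF 0 v = fun x => ((gaussianPDFReal 0 v x).toNNReal : ℝ≥0∞) from rfl]
  rw [integrable_withDensity_iff_integrable_smul
    ((measurable_gaussianPDFReal 0 v).real_toNNReal)]
  rw [gaussianReal_smul_eq]
  have : (fun x => gaussianPDFReal 0 v x * Real.exp (c * x))
      = fun x => Real.exp (v * c ^ 2 / 2) * gaussianPDFReal (v * c) v x := by
    funext x; exact gaussianPDFReal_mul_exp hv c x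
  rw [this]
  exact (integrable_gaussianPDFReal _ _).const_mul _

lemma integral_exp_mul_gaussianReal (c : ℝ) (v : ℝ≥0) :
    ∫ x, Real.exp (c * x) ∂(gaussianReal 0 v) = Real.exp (v * c ^ 2 / 2) := by
  by_cases hv : v = 0
  · simp [hv]
  rw [gaussianReal_of_var_ne_zero _ hv]
  rw [show gaussianPDF 0 v = fun x => ((gaussianPDFReal 0 v x).toNNReal : ℝ≥0∞) from rfl]
  rw [integral_withDensity_eq_integral_smul
    ((measurable_gaussianPDFReal 0 v).real_toNNReal)]
  rw [gaussianReal_smul_eq]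
  have : (fun x => gaussianPDFReal 0 v x * Real.exp (c * x))
      = fun x => Real.exp (v * c ^ 2 / 2) * gaussianPDFReal (v * c) v x := by
    funext x; exact gaussianPDFReal_mul_exp hv c x
  rw [this, integral_const_mul, integral_gaussianPDFReal_eq_one _ hv, mul_one]

lemma integrable_exp_sum_pi (d : ℕ) (v : ℝ≥0) (c : Fin d → ℝ) :
    Integrable (fun z : Fin d → ℝ => Real.exp (∑ j, c j * z j))
      (Measure.pi fun _ : Fin d => gaussianReal 0 v) := by
  letI : MeasureSpace ℝ := ⟨gaussianReal 0 v⟩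
  haveI : SigmaFinite (volume : Measure ℝ) :=
    (inferInstance : SigmaFinite (gaussianReal 0 v))
  have : (fun z : Fin d → ℝ => Real.exp (∑ j, c j * z j))
      = fun z => ∏ j, Real.exp (c j * z j) := by
    funext z; rw [Real.exp_sum]
  rw [this]
  exact Integrable.fintype_prod (𝕜 := ℝ) (f := fun j x => Real.exp (c j * x))
    fun j => integrable_exp_mul_gaussianReal (c j) v

lemma integral_exp_sum_pi (d : ℕ) (v : ℝ≥0) (c : Fin d → ℝ) :
    ∫ z : Fin d → ℝ, Real.exp (∑ j, c j * z j)
        ∂(Measure.pi fun _ : Fin d => gaussianReal 0 v)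
      = Real.exp ((v : ℝ) * (∑ j, (c j) ^ 2) / 2) := by
  letI : MeasureSpace ℝ := ⟨gaussianReal 0 v⟩
  haveI : SigmaFinite (volume : Measure ℝ) :=
    (inferInstance : SigmaFinite (gaussianReal 0 v))
  have : (fun z : Fin d → ℝ => Real.exp (∑ j, c j * z j))
      = fun z => ∏ j, Real.exp (c j * z j) := by
    funext z; rw [Real.exp_sum]
  rw [this]
  rw [show (Measure.pi fun _ : Fin d => gaussianReal 0 v)
      = (volume : Measure (Fin d → ℝ)) from rfl]
  erw [integral_fintype_prod_eq_prod (μ := fun _ : Fin d => (volume : Measure ℝ)) (fun j x => Real.exp (c j * x))]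
  have : ∀ j, ∫ x : ℝ, Real.exp (c j * x) = Real.exp ((v : ℝ) * (c j) ^ 2 / 2) :=
    fun j => integral_exp_mul_gaussianReal (c j) v
  simp_rw [this, ← Real.exp_sum]
  congr 1
  rw [Finset.mul_sum, Finset.sum_div]

/-- Lemma 1 (bias of the partially privatised IPW ATE estimate): with
`z ~ N(0, σ² I_d)`, `E[τ̂_n] = τ̂ + (1/n) ∑ i, α i (exp(σ²‖x i‖²/2) − 1)`. -/
theorem exp_privatised_ipw_ate (d n : ℕ) (hn : 0 < n) (σ : ℝ)
    (x : Fin n → Fin d → ℝ) (w : Fin d → ℝ) (t : Fin n → Bool) (y : Fin n → ℝ)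
    (α : Fin n → ℝ)
    (hα : ∀ i, α i = if t i then y i * Real.exp (-∑ j, w j * x i j)
                     else -(y i * Real.exp (∑ j, w j * x i j))) :
    ∫ z : Fin d → ℝ,
        (1 / (n : ℝ)) *
          ((∑ i ∈ univ.filter fun i => t i = true,
              y i * (1 + Real.exp (-∑ j, w j * x i j) * Real.exp (-∑ j, z j * x i j)))
           - ∑ i ∈ univ.filter fun i => t i = false,
              y i * (1 + Real.exp (∑ j, w j * x i j) * Real.exp (∑ j, z j * x i j)))
        ∂(Measure.pi fun _ : Fin d => gaussianReal 0 ⟨σ ^ 2, sq_nonneg σ⟩)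
      = (1 / (n : ℝ)) *
          ((∑ i ∈ univ.filter fun i => t i = true,
              y i * (1 + Real.exp (-∑ j, w j * x i j)))
           - ∑ i ∈ univ.filter fun i => t i = false,
              y i * (1 + Real.exp (∑ j, w j * x i j)))
        + (1 / (n : ℝ)) *
          ∑ i, α i * (Real.exp (σ ^ 2 * (∑ j, (x i j) ^ 2) / 2) - 1) := by
  classical
  set v : ℝ≥0 := ⟨σ ^ 2, sq_nonneg σ⟩ with hv
  set μ : Measure (Fin d → ℝ) := Measure.pi fun _ : Fin d => gaussianReal 0 v with hμ
  set e : Fin n → ℝ := fun i => if t i then (-1 : ℝ) else 1 with he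
  set c : Fin n → Fin d → ℝ := fun i j => e i * x i j with hc
  set C : ℝ := (∑ i ∈ univ.filter fun i => t i = true, y i)
      - ∑ i ∈ univ.filter fun i => t i = false, y i with hC
  -- sum over univ splits into the two filters
  have huniv : ∀ f : Fin n → ℝ,
      ∑ i, f i = (∑ i ∈ univ.filter fun i => t i = true, f i)
        + ∑ i ∈ univ.filter fun i => t i = false, f i := by
    intro f
    rw [← Finset.sum_filter_add_sum_filter_not univ (fun i => t i = true) f]
    congr 2
    ext i
    simp [Bool.not_eq_true]
  -- exponent rewrites
  have hexpT : ∀ i, t i = true → ∀ z : Fin d → ℝ,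
      (∑ j, c i j * z j) = -∑ j, z j * x i j := by
    intro i hi z
    rw [← Finset.sum_neg_distrib]
    refine Finset.sum_congr rfl fun j _ => ?_
    simp [hc, he, hi]; ring
  have hexpF : ∀ i, t i = false → ∀ z : Fin d → ℝ,
      (∑ j, c i j * z j) = ∑ j, z j * x i j := by
    intro i hi z
    refine Finset.sum_congr rfl fun j _ => ?_
    simp [hc, he, hi]; ring
  -- pointwise decomposition of the integrand
  have hpt : ∀ z : Fin d → ℝ,
      ((∑ i ∈ univ.filter fun i => t i = true,
          y i * (1 + Real.exp (-∑ j, w j * x i j) * Real.exp (-∑ j, z j * x i j)))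
       - ∑ i ∈ univ.filter fun i => t i = false,
          y i * (1 + Real.exp (∑ j, w j * x i j) * Real.exp (∑ j, z j * x i j)))
      = C + ∑ i, α i * Real.exp (∑ j, c i j * z j) := by
    intro z
    have hA : ∀ i ∈ univ.filter fun i => t i = true,
        y i * (1 + Real.exp (-∑ j, w j * x i j) * Real.exp (-∑ j, z j * x i j))
          = y i + α i * Real.exp (∑ j, c i j * z j) := by
      intro i hi
      have hi' : t i = true := by simpa using hi
      rw [hα i, hi', if_pos rfl, hexpT i hi' z]
      ring
    have hB : ∀ i ∈ univ.filter fun i => t i = false,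
        y i * (1 + Real.exp (∑ j, w j * x i j) * Real.exp (∑ j, z j * x i j))
          = y i - α i * Real.exp (∑ j, c i j * z j) := by
      intro i hi
      have hi' : t i = false := by simpa using hi
      rw [hα i, hi', if_neg (by simp), hexpF i hi' z]
      ring
    rw [Finset.sum_congr rfl hA, Finset.sum_congr rfl hB,
      Finset.sum_add_distrib, Finset.sum_sub_distrib,
      huniv (fun i => α i * Real.exp (∑ j, c i j * z j)), hC]
    ring
  -- same decomposition without z
  have hpt0 :
      ((∑ i ∈ univ.filter fun i => t i = true,
          y i * (1 + Real.exp (-∑ j, w j * x i j)))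
       - ∑ i ∈ univ.filter fun i => t i = false,
          y i * (1 + Real.exp (∑ j, w j * x i j)))
      = C + ∑ i, α i := by
    have hA : ∀ i ∈ univ.filter fun i => t i = true,
        y i * (1 + Real.exp (-∑ j, w j * x i j)) = y i + α i := by
      intro i hi
      have hi' : t i = true := by simpa using hi
      rw [hα i, hi', if_pos rfl]
      ring
    have hB : ∀ i ∈ univ.filter fun i => t i = false,
        y i * (1 + Real.exp (∑ j, w j * x i j)) = y i - α i := by
      intro i hi
      have hi' : t i = false := by simpa using hi
      rw [hα i, hi', if_neg (by simp)]
      ring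
    rw [Finset.sum_congr rfl hA, Finset.sum_congr rfl hB,
      Finset.sum_add_distrib, Finset.sum_sub_distrib, huniv α, hC]
    ring
  -- compute the integral
  haveI : IsProbabilityMeasure μ := by
    rw [hμ]; infer_instance
  have hIint : ∀ i : Fin n, Integrable (fun z : Fin d → ℝ =>
      α i * Real.exp (∑ j, c i j * z j)) μ :=
    fun i => (integrable_exp_sum_pi d v (c i)).const_mul (α i)
  have hIval : ∀ i : Fin n, ∫ z : Fin d → ℝ, Real.exp (∑ j, c i j * z j) ∂μ
      = Real.exp (σ ^ 2 * (∑ j, (x i j) ^ 2) / 2) := by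
    intro i
    have h1 : e i ^ 2 = 1 := by
      simp only [he]; split <;> norm_num
    have hxx : (∑ j, (c i j) ^ 2) = ∑ j, (x i j) ^ 2 :=
      Finset.sum_congr rfl fun j _ => by simp only [hc, mul_pow, h1, one_mul]
    rw [hμ, integral_exp_sum_pi d v (c i), hxx, show ((v : ℝ)) = σ ^ 2 from rfl]
  simp only [hpt]
  rw [integral_const_mul,
    integral_add (integrable_const C) (integrable_finset_sum _ fun i _ => hIint i),
    integral_const, integral_finset_sum _ fun i _ => hIint i]
  simp only [probReal_univ, measure_univ, ENNReal.toReal_one, smul_eq_mul, one_mul]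
  simp_rw [integral_const_mul, hIval]
  rw [hpt0]
  have hsub : ∑ i, α i * (Real.exp (σ ^ 2 * (∑ j, (x i j) ^ 2) / 2) - 1)
      = (∑ i, α i * Real.exp (σ ^ 2 * (∑ j, (x i j) ^ 2) / 2)) - ∑ i, α i := by
    rw [← Finset.sum_sub_distrib]
    exact Finset.sum_congr rfl fun i _ => by ring
  rw [hsub]
  ring
end

section
/- Let x₁,…,xₙ ∈ R^d, w ∈ R^d, t_i ∈ {0,1}, y_i ≥ 0, and define φ(z) = (1/n)[Σ_{i: t_i=1} y_i(1 + exp(−w·x_i)exp(−z·x_i)) − Σ_{i: t_i=0} y_i(1 + exp(w·x_i)exp(z·x_i))]. Suppose ‖x_i‖ ≤ 1 for all i. If z, z′ ∈ R^d satisfy |z·x_i| ≤ ζ and |z′·x_i| ≤ ζ for all i, then |φ(z) − φ(z′)| ≤ (2/n) sinh(ζ)·(Σ_{i: t_i=1} y_i exp(−w·x_i) + Σ_{i: t_i=0} y_i exp(w·x_i)). -/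
open Finset

lemma exp_sub_exp_abs_le {a b ζ : ℝ} (ha : |a| ≤ ζ) (hb : |b| ≤ ζ) :
    |Real.exp a - Real.exp b| ≤ 2 * Real.sinh ζ := by
  rw [abs_le] at ha hb ⊢
  rw [Real.sinh_eq]
  constructor
  · have h1 : Real.exp b ≤ Real.exp ζ := Real.exp_le_exp.2 hb.2
    have h2 : Real.exp (-ζ) ≤ Real.exp a := Real.exp_le_exp.2 (neg_le.2 (neg_le.1 ha.1))
    nlinarith
  · have h1 : Real.exp a ≤ Real.exp ζ := Real.exp_le_exp.2 ha.2
    have h2 : Real.exp (-ζ) ≤ Real.exp b := Real.exp_le_exp.2 (neg_le.2 (neg_le.1 hb.1))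
    nlinarith

/-- Deterministic core of Lemma 2 (bounded difference for the privatised IPW estimate). -/
theorem ipw_bounded_difference (d n : ℕ) (hn : 0 < n)
    (x : Fin n → Fin d → ℝ) (w : Fin d → ℝ) (t : Fin n → Bool) (y : Fin n → ℝ)
    (hy : ∀ i, 0 ≤ y i) (hx : ∀ i, Real.sqrt (∑ j, (x i j) ^ 2) ≤ 1)
    (ζ : ℝ) (z z' : Fin d → ℝ)
    (hz : ∀ i, |∑ j, z j * x i j| ≤ ζ) (hz' : ∀ i, |∑ j, z' j * x i j| ≤ ζ) :
    |(1 / (n : ℝ)) *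
        ((∑ i ∈ univ.filter fun i => t i = true,
            y i * (1 + Real.exp (-∑ j, w j * x i j) * Real.exp (-∑ j, z j * x i j)))
         - ∑ i ∈ univ.filter fun i => t i = false,
            y i * (1 + Real.exp (∑ j, w j * x i j) * Real.exp (∑ j, z j * x i j)))
      - (1 / (n : ℝ)) *
        ((∑ i ∈ univ.filter fun i => t i = true,
            y i * (1 + Real.exp (-∑ j, w j * x i j) * Real.exp (-∑ j, z' j * x i j)))
         - ∑ i ∈ univ.filter fun i => t i = false,
            y i * (1 + Real.exp (∑ j, w j * x i j) * Real.exp (∑ j, z' j * x i j)))|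
      ≤ (2 / (n : ℝ)) * Real.sinh ζ *
          ((∑ i ∈ univ.filter fun i => t i = true, y i * Real.exp (-∑ j, w j * x i j))
           + ∑ i ∈ univ.filter fun i => t i = false, y i * Real.exp (∑ j, w j * x i j)) := by
  have i0 : Fin n := ⟨0, hn⟩
  have hζ : 0 ≤ ζ := le_trans (abs_nonneg _) (hz i0)
  have hsinh : 0 ≤ Real.sinh ζ := by
    rw [Real.sinh_eq]
    have := Real.exp_le_exp.2 (neg_le_self hζ)
    linarith
  have hn' : (0:ℝ) < n := by exact_mod_cast hn
  set T1 := univ.filter fun i => t i = true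
  set T0 := univ.filter fun i => t i = false
  have key : (1 / (n : ℝ)) *
        ((∑ i ∈ T1, y i * (1 + Real.exp (-∑ j, w j * x i j) * Real.exp (-∑ j, z j * x i j)))
         - ∑ i ∈ T0, y i * (1 + Real.exp (∑ j, w j * x i j) * Real.exp (∑ j, z j * x i j)))
      - (1 / (n : ℝ)) *
        ((∑ i ∈ T1, y i * (1 + Real.exp (-∑ j, w j * x i j) * Real.exp (-∑ j, z' j * x i j)))
         - ∑ i ∈ T0, y i * (1 + Real.exp (∑ j, w j * x i j) * Real.exp (∑ j, z' j * x i j)))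
      = (1 / (n : ℝ)) *
        ((∑ i ∈ T1, y i * Real.exp (-∑ j, w j * x i j) *
            (Real.exp (-∑ j, z j * x i j) - Real.exp (-∑ j, z' j * x i j)))
         - ∑ i ∈ T0, y i * Real.exp (∑ j, w j * x i j) *
            (Real.exp (∑ j, z j * x i j) - Real.exp (∑ j, z' j * x i j))) := by
    have h1 : ∑ i ∈ T1, y i * Real.exp (-∑ j, w j * x i j) *
            (Real.exp (-∑ j, z j * x i j) - Real.exp (-∑ j, z' j * x i j))
        = (∑ i ∈ T1, y i * (1 + Real.exp (-∑ j, w j * x i j) * Real.exp (-∑ j, z j * x i j)))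
          - ∑ i ∈ T1, y i * (1 + Real.exp (-∑ j, w j * x i j) * Real.exp (-∑ j, z' j * x i j)) := by
      rw [← Finset.sum_sub_distrib]
      exact Finset.sum_congr rfl fun i _ => by ring
    have h0 : ∑ i ∈ T0, y i * Real.exp (∑ j, w j * x i j) *
            (Real.exp (∑ j, z j * x i j) - Real.exp (∑ j, z' j * x i j))
        = (∑ i ∈ T0, y i * (1 + Real.exp (∑ j, w j * x i j) * Real.exp (∑ j, z j * x i j)))
          - ∑ i ∈ T0, y i * (1 + Real.exp (∑ j, w j * x i j) * Real.exp (∑ j, z' j * x i j)) := by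
      rw [← Finset.sum_sub_distrib]
      exact Finset.sum_congr rfl fun i _ => by ring
    rw [h1, h0]
    ring
  rw [key]
  have b1 : |∑ i ∈ T1, y i * Real.exp (-∑ j, w j * x i j) *
      (Real.exp (-∑ j, z j * x i j) - Real.exp (-∑ j, z' j * x i j))|
      ≤ ∑ i ∈ T1, y i * Real.exp (-∑ j, w j * x i j) * (2 * Real.sinh ζ) := by
    refine (Finset.abs_sum_le_sum_abs _ _).trans (Finset.sum_le_sum fun i _ => ?_)
    rw [abs_mul]
    have hpos : 0 ≤ y i * Real.exp (-∑ j, w j * x i j) :=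
      mul_nonneg (hy i) (Real.exp_pos _).le
    rw [abs_of_nonneg hpos]
    refine mul_le_mul_of_nonneg_left ?_ hpos
    exact exp_sub_exp_abs_le (by rw [abs_neg]; exact hz i) (by rw [abs_neg]; exact hz' i)
  have b0 : |∑ i ∈ T0, y i * Real.exp (∑ j, w j * x i j) *
      (Real.exp (∑ j, z j * x i j) - Real.exp (∑ j, z' j * x i j))|
      ≤ ∑ i ∈ T0, y i * Real.exp (∑ j, w j * x i j) * (2 * Real.sinh ζ) := by
    refine (Finset.abs_sum_le_sum_abs _ _).trans (Finset.sum_le_sum fun i _ => ?_)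
    rw [abs_mul]
    have hpos : 0 ≤ y i * Real.exp (∑ j, w j * x i j) :=
      mul_nonneg (hy i) (Real.exp_pos _).le
    rw [abs_of_nonneg hpos]
    refine mul_le_mul_of_nonneg_left ?_ hpos
    exact exp_sub_exp_abs_le (hz i) (hz' i)
  rw [abs_mul, abs_of_nonneg (by positivity : (0:ℝ) ≤ 1 / (n:ℝ))]
  have habs : |(∑ i ∈ T1, y i * Real.exp (-∑ j, w j * x i j) *
      (Real.exp (-∑ j, z j * x i j) - Real.exp (-∑ j, z' j * x i j)))
      - ∑ i ∈ T0, y i * Real.exp (∑ j, w j * x i j) *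
      (Real.exp (∑ j, z j * x i j) - Real.exp (∑ j, z' j * x i j))|
      ≤ (∑ i ∈ T1, y i * Real.exp (-∑ j, w j * x i j) * (2 * Real.sinh ζ))
        + ∑ i ∈ T0, y i * Real.exp (∑ j, w j * x i j) * (2 * Real.sinh ζ) :=
    (abs_sub _ _).trans (add_le_add b1 b0)
  calc (1 / (n:ℝ)) * |_| ≤ (1 / (n:ℝ)) *
        ((∑ i ∈ T1, y i * Real.exp (-∑ j, w j * x i j) * (2 * Real.sinh ζ))
        + ∑ i ∈ T0, y i * Real.exp (∑ j, w j * x i j) * (2 * Real.sinh ζ)) :=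
      mul_le_mul_of_nonneg_left habs (by positivity)
    _ = (2 / (n:ℝ)) * Real.sinh ζ *
          ((∑ i ∈ T1, y i * Real.exp (-∑ j, w j * x i j))
           + ∑ i ∈ T0, y i * Real.exp (∑ j, w j * x i j)) := by
      rw [← Finset.sum_mul, ← Finset.sum_mul]
      ring
end

section
/- Let z ~ N(0, σ²I_d) and define the privatised ATT estimate τ̂_{n,ATT}(z) = (1/n)Σ_{i=1}^n (t_i − (1−t_i)·exp(w·x_i)·exp(z·x_i))·y_i. Then E[τ̂_{n,ATT}(z)] = τ̂_ATT + (1/n)Σ_{i=1}^n α_{i,ATT}·(exp(σ²‖x_i‖²/2) − 1), where τ̂_ATT = (1/n)Σ_i (t_i − (1−t_i)exp(w·x_i))·y_i and α_{i,ATT} = −1_{t_i=0}·y_i·exp(w·x_i). -/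
open MeasureTheory ProbabilityTheory
open Real
open scoped NNReal ENNReal

lemma pdf_mul_exp (v : ℝ≥0) (hv : v ≠ 0) (a z : ℝ) :
    Real.exp (a * z) * gaussianPDFReal 0 v z
      = Real.exp (v * a ^ 2 / 2) * gaussianPDFReal (v * a) v z := by
  have hv' : (v:ℝ) ≠ 0 := by exact_mod_cast hv
  simp only [gaussianPDFReal]
  rw [mul_left_comm, mul_left_comm (Real.exp (v * a ^ 2 / 2)), ← Real.exp_add, ← Real.exp_add]
  congr 2
  field_simp
  ring

lemma mgf_gauss (v : ℝ≥0) (a : ℝ) :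
    ∫ z : ℝ, Real.exp (a * z) ∂(gaussianReal 0 v) = Real.exp (v * a ^ 2 / 2) := by
  rcases eq_or_ne v 0 with rfl | hv
  · simp [gaussianReal_zero_var]
  · rw [gaussianReal_of_var_ne_zero _ hv, gaussianPDF_def]
    have hmeas : Measurable fun z : ℝ => (gaussianPDFReal 0 v z).toNNReal :=
      (measurable_gaussianPDFReal 0 v).real_toNNReal
    have : (fun z : ℝ => ENNReal.ofReal (gaussianPDFReal 0 v z))
        = fun z : ℝ => ((gaussianPDFReal 0 v z).toNNReal : ℝ≥0∞) := rfl
    rw [this, integral_withDensity_eq_integral_smul hmeas]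
    have heq : ∀ z : ℝ, (gaussianPDFReal 0 v z).toNNReal • Real.exp (a * z)
        = Real.exp (v * a ^ 2 / 2) * gaussianPDFReal (v * a) v z := by
      intro z
      rw [NNReal.smul_def, smul_eq_mul, Real.coe_toNNReal _ (gaussianPDFReal_nonneg 0 v z),
        mul_comm, pdf_mul_exp v hv]
    simp_rw [heq]
    rw [integral_const_mul, integral_gaussianPDFReal_eq_one _ hv, mul_one]

lemma integrable_exp_gauss (v : ℝ≥0) (a : ℝ) :
    Integrable (fun z : ℝ => Real.exp (a * z)) (gaussianReal 0 v) := by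
  rcases eq_or_ne v 0 with rfl | hv
  · rw [gaussianReal_zero_var]
    have hm : Measurable fun z : ℝ => Real.exp (a * z) :=
      Real.measurable_exp.comp (measurable_id.const_mul a)
    exact (integrable_const (Real.exp (a * 0))).congr (MeasureTheory.ae_eq_dirac' hm).symm
  · rw [gaussianReal_of_var_ne_zero _ hv, gaussianPDF_def]
    have hmeas : Measurable fun z : ℝ => (gaussianPDFReal 0 v z).toNNReal :=
      (measurable_gaussianPDFReal 0 v).real_toNNReal
    have : (fun z : ℝ => ENNReal.ofReal (gaussianPDFReal 0 v z))
        = fun z : ℝ => ((gaussianPDFReal 0 v z).toNNReal : ℝ≥0∞) := rfl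
    rw [this, integrable_withDensity_iff_integrable_smul hmeas]
    have heq : ∀ z : ℝ, (gaussianPDFReal 0 v z).toNNReal • Real.exp (a * z)
        = Real.exp (v * a ^ 2 / 2) * gaussianPDFReal (v * a) v z := by
      intro z
      rw [NNReal.smul_def, smul_eq_mul, Real.coe_toNNReal _ (gaussianPDFReal_nonneg 0 v z),
        mul_comm, pdf_mul_exp v hv]
    simp_rw [heq]
    exact (integrable_gaussianPDFReal (v*a) v).const_mul _

lemma integrable_exp_pi (d : ℕ) (v : ℝ≥0) (a : Fin d → ℝ) :
    Integrable (fun z : Fin d → ℝ => Real.exp (∑ j, z j * a j))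
      (Measure.pi fun _ : Fin d => gaussianReal 0 v) := by
  letI : MeasureSpace ℝ := ⟨gaussianReal 0 v⟩
  haveI : SigmaFinite (volume : Measure ℝ) := by
    show SigmaFinite (gaussianReal 0 v); infer_instance
  have h : (fun z : Fin d → ℝ => Real.exp (∑ j, z j * a j))
      = fun z : Fin d → ℝ => ∏ j, Real.exp (a j * z j) := by
    funext z
    rw [← Real.exp_sum]
    congr 1
    exact Finset.sum_congr rfl fun j _ => mul_comm _ _
  rw [h]
  exact MeasureTheory.Integrable.fintype_prod (f := fun j t => Real.exp (a j * t))
    fun j => integrable_exp_gauss v (a j)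

lemma pi_exp (d : ℕ) (v : ℝ≥0) (a : Fin d → ℝ) :
    ∫ z : Fin d → ℝ, Real.exp (∑ j, z j * a j)
        ∂(Measure.pi fun _ : Fin d => gaussianReal 0 v)
      = Real.exp (v * (∑ j, (a j) ^ 2) / 2) := by
  letI : MeasureSpace ℝ := ⟨gaussianReal 0 v⟩
  haveI : SigmaFinite (volume : Measure ℝ) := by
    show SigmaFinite (gaussianReal 0 v); infer_instance
  have h : (fun z : Fin d → ℝ => Real.exp (∑ j, z j * a j))
      = fun z : Fin d → ℝ => ∏ j, Real.exp (a j * z j) := by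
    funext z
    rw [← Real.exp_sum]
    congr 1
    exact Finset.sum_congr rfl fun j _ => mul_comm _ _
  rw [h]
  have := MeasureTheory.integral_fintype_prod_eq_prod (𝕜 := ℝ) (ι := Fin d)
    (E := fun _ => ℝ) (fun j t => Real.exp (a j * t)) (μ := fun _ => (volume : Measure ℝ))
  rw [show (Measure.pi fun _ : Fin d => gaussianReal 0 v)
      = (volume : Measure (Fin d → ℝ)) from rfl]
  rw [show (volume : Measure (Fin d → ℝ)) = Measure.pi fun _ => volume from rfl, this]
  have h2 : ∀ j : Fin d, (∫ t : ℝ, Real.exp (a j * t))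
      = Real.exp ((v : ℝ) * (a j) ^ 2 / 2) := fun j => mgf_gauss v (a j)
  simp_rw [h2, ← Real.exp_sum, ← Finset.sum_div, ← Finset.mul_sum]

/-- ATT analogue of Lemma 1: expectation of the privatised ATT estimate under
`z ~ N(0, σ² I_d)`. -/
theorem exp_privatised_att (d n : ℕ) (hn : 0 < n) (σ : ℝ)
    (x : Fin n → Fin d → ℝ) (t : Fin n → Bool) (y : Fin n → ℝ) (w : Fin d → ℝ) :
    ∫ z : Fin d → ℝ,
        (1 / (n : ℝ)) * ∑ i,
          ((if t i then (1:ℝ) else 0)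
            - (if t i then (0:ℝ) else 1) * Real.exp (∑ j, w j * x i j)
                * Real.exp (∑ j, z j * x i j)) * y i
        ∂(Measure.pi fun _ : Fin d => gaussianReal 0 ⟨σ ^ 2, sq_nonneg σ⟩)
      = (1 / (n : ℝ)) * ∑ i,
          ((if t i then (1:ℝ) else 0)
            - (if t i then (0:ℝ) else 1) * Real.exp (∑ j, w j * x i j)) * y i
        + (1 / (n : ℝ)) * ∑ i,
          (-(if t i then (0:ℝ) else 1) * y i * Real.exp (∑ j, w j * x i j))
            * (Real.exp (σ ^ 2 * (∑ j, (x i j) ^ 2) / 2) - 1) := by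
  set v : ℝ≥0 := ⟨σ ^ 2, sq_nonneg σ⟩ with hv
  set μ := Measure.pi fun _ : Fin d => gaussianReal 0 v with hμ
  haveI : IsProbabilityMeasure μ := by rw [hμ]; infer_instance
  have hint : ∀ i : Fin n, Integrable
      (fun z : Fin d → ℝ =>
        ((if t i then (1:ℝ) else 0)
          - (if t i then (0:ℝ) else 1) * Real.exp (∑ j, w j * x i j)
              * Real.exp (∑ j, z j * x i j)) * y i) μ := by
    intro i
    exact (((integrable_const _).sub
      ((integrable_exp_pi d v (x i)).const_mul _)).mul_const _)
  rw [MeasureTheory.integral_const_mul, MeasureTheory.integral_finset_sum _ fun i _ => hint i]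
  have key : ∀ i : Fin n,
      (∫ z : Fin d → ℝ,
        ((if t i then (1:ℝ) else 0)
          - (if t i then (0:ℝ) else 1) * Real.exp (∑ j, w j * x i j)
              * Real.exp (∑ j, z j * x i j)) * y i ∂μ)
      = ((if t i then (1:ℝ) else 0)
          - (if t i then (0:ℝ) else 1) * Real.exp (∑ j, w j * x i j)
              * Real.exp (σ ^ 2 * (∑ j, (x i j) ^ 2) / 2)) * y i := by
    intro i
    rw [MeasureTheory.integral_mul_const,
      MeasureTheory.integral_sub (integrable_const _)
        ((integrable_exp_pi d v (x i)).const_mul _),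
      MeasureTheory.integral_const, MeasureTheory.integral_const_mul,
      pi_exp d v (x i)]
    simp [hv]
    exact Or.inl rfl
  simp_rw [key]
  rw [← mul_add, ← Finset.sum_add_distrib]
  congr 1
  refine Finset.sum_congr rfl fun i _ => ?_
  ring
end

section
/- Suppose |y_i| ≤ C_y and exp(w·x_i) ≤ ξ for all i, with ξ ≥ 0. Then changing any single data point (x_i, t_i, y_i) to another point (x_i′, t_i′, y_i′) also satisfying these constraints changes the ATT estimator τ̂_{n,ATT} = (1/n)Σ_i (t_i − (1−t_i)exp(w·x_i))·y_i by at most (2 C_y / n)·max(1, ξ). -/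
lemma att_term_bound (b : Bool) (e y Cy ξ : ℝ) (he : 0 ≤ e) (heξ : e ≤ ξ)
    (hy : |y| ≤ Cy) :
    |((if b then (1:ℝ) else 0) - (if b then (0:ℝ) else 1) * e) * y| ≤ Cy * max 1 ξ := by
  have hCy : 0 ≤ Cy := le_trans (abs_nonneg y) hy
  cases b with
  | true =>
    simp only [if_true, zero_mul, sub_zero, one_mul]
    calc |y| ≤ Cy := hy
      _ ≤ Cy * max 1 ξ := le_mul_of_one_le_right hCy (le_max_left 1 ξ)
  | false =>
    simp only [Bool.false_eq_true, if_false, one_mul, zero_sub, abs_neg, abs_mul]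
    calc |e| * |y| ≤ ξ * Cy := by
          apply mul_le_mul _ hy (abs_nonneg y) (le_trans he heξ)
          rwa [abs_of_nonneg he]
      _ = Cy * ξ := mul_comm _ _
      _ ≤ Cy * max 1 ξ := mul_le_mul_of_nonneg_left (le_max_right 1 ξ) hCy

/-- L2-sensitivity of the ATT estimator: changing a single data point changes
`τ̂_{n,ATT}` by at most `(2 C_y / n) max(1, ξ)`. -/
theorem att_sensitivity (d n : ℕ) (hn : 0 < n) (w : Fin d → ℝ) (Cy ξ : ℝ)
    (hξ : 0 ≤ ξ)
    (x x' : Fin n → Fin d → ℝ) (t t' : Fin n → Bool) (y y' : Fin n → ℝ)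
    (hy : ∀ i, |y i| ≤ Cy) (hy' : ∀ i, |y' i| ≤ Cy)
    (hx : ∀ i, Real.exp (∑ j, w j * x i j) ≤ ξ)
    (hx' : ∀ i, Real.exp (∑ j, w j * x' i j) ≤ ξ)
    (i0 : Fin n) (hdiff : ∀ i, i ≠ i0 → x i = x' i ∧ t i = t' i ∧ y i = y' i) :
    |(1 / (n : ℝ)) * ∑ i,
        ((if t i then (1:ℝ) else 0)
          - (if t i then (0:ℝ) else 1) * Real.exp (∑ j, w j * x i j)) * y i
      - (1 / (n : ℝ)) * ∑ i,
        ((if t' i then (1:ℝ) else 0)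
          - (if t' i then (0:ℝ) else 1) * Real.exp (∑ j, w j * x' i j)) * y' i|
      ≤ (2 * Cy / (n : ℝ)) * max 1 ξ := by
  set f : Fin n → ℝ := fun i =>
    ((if t i then (1:ℝ) else 0)
      - (if t i then (0:ℝ) else 1) * Real.exp (∑ j, w j * x i j)) * y i with hf
  set g : Fin n → ℝ := fun i =>
    ((if t' i then (1:ℝ) else 0)
      - (if t' i then (0:ℝ) else 1) * Real.exp (∑ j, w j * x' i j)) * y' i with hg
  have hsum : ∑ i, f i - ∑ i, g i = f i0 - g i0 := by
    rw [← Finset.sum_sub_distrib]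
    rw [Finset.sum_eq_single i0]
    · intro i _ hi
      obtain ⟨h1, h2, h3⟩ := hdiff i hi
      simp [hf, hg, h1, h2, h3]
    · intro h; exact absurd (Finset.mem_univ i0) h
  have hfb : |f i0| ≤ Cy * max 1 ξ :=
    att_term_bound _ _ _ _ _ (Real.exp_nonneg _) (hx i0) (hy i0)
  have hgb : |g i0| ≤ Cy * max 1 ξ :=
    att_term_bound _ _ _ _ _ (Real.exp_nonneg _) (hx' i0) (hy' i0)
  have hn' : (0:ℝ) < n := by exact_mod_cast hn
  rw [← mul_sub, hsum, abs_mul, abs_of_pos (by positivity : (0:ℝ) < 1 / n)]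
  have : |f i0 - g i0| ≤ 2 * Cy * max 1 ξ := by
    calc |f i0 - g i0| ≤ |f i0| + |g i0| := abs_sub _ _
      _ ≤ Cy * max 1 ξ + Cy * max 1 ξ := add_le_add hfb hgb
      _ = 2 * Cy * max 1 ξ := by ring
  calc 1 / (n:ℝ) * |f i0 - g i0| ≤ 1 / (n:ℝ) * (2 * Cy * max 1 ξ) :=
        mul_le_mul_of_nonneg_left this (by positivity)
    _ = (2 * Cy / (n : ℝ)) * max 1 ξ := by ring
end
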